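/- arXiv:1811.01576 — 4 statements merged into one kernel-verified Lean document; each statement's English description precedes it below -/
import Mathlib

section
/- For all natural numbers $d \ge 1$ and $m \ge 1$, the volume of the unit ball $B_{2m}^d = \{x \in \mathbb{R}^d : \sum_{j=1}^d |x_j|^{2m} \le 1\}$ satisfies $2^d (e(d + 2m))^{-d/(2m)} \le \mathrm{vol}\,B_{2m}^d \le 2^d (2em/d)^{d/(2m)}$. -/
open MeasureTheory

private lemma one_le_gamma {x : ℝ} (hx : 2 ≤ x) : 1 ≤ Real.Gamma x := by
  rcases eq_or_lt_of_le hx with h | h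
  · rw [← h, Real.Gamma_two]
  · rw [← Real.Gamma_two]
    exact (Real.Gamma_strictMonoOn_Ici (by norm_num) (le_of_lt h) h).le

private lemma gamma_le_one {x : ℝ} (h0 : 0 ≤ x) (h1 : x ≤ 1) : Real.Gamma (1 + x) ≤ 1 := by
  have h := Real.convexOn_Gamma.2 (Set.mem_Ioi.mpr one_pos)
    (Set.mem_Ioi.mpr two_pos) (show (0:ℝ) ≤ 1 - x by linarith) h0 (by ring)
  simp only [smul_eq_mul, mul_one] at h
  calc Real.Gamma (1 + x) = Real.Gamma (1 - x + x * 2) := by ring_nf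
    _ ≤ (1 - x) * Real.Gamma 1 + x * Real.Gamma 2 := h
    _ = 1 := by rw [Real.Gamma_one, Real.Gamma_two]; ring

private lemma gamma_ge_aux (n : ℕ) : ∀ s : ℝ, 0 < s → s ≤ n + 1 →
    (s / Real.exp 1) ^ s ≤ Real.Gamma (1 + s) := by
  induction n with
  | zero =>
    intro s hs hs1
    norm_num at hs1
    have h2 : (2 : ℝ) ≤ s + 2 := by linarith
    have hsne : s + 1 ≠ 0 := by positivity
    have hΓ : Real.Gamma (s + 2) = (s + 1) * Real.Gamma (s + 1) := by
      have := Real.Gamma_add_one (s := s + 1) hsne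
      rw [show s + 1 + 1 = s + 2 by ring] at this
      exact this
    have h3 : 1 / (s + 1) ≤ Real.Gamma (1 + s) := by
      rw [add_comm 1 s, div_le_iff₀ (show (0:ℝ) < s + 1 by positivity)]
      calc (1:ℝ) ≤ Real.Gamma (s + 2) := one_le_gamma h2
        _ = Real.Gamma (s + 1) * (s + 1) := by rw [hΓ]; ring
    refine le_trans ?_ h3
    have hse : 0 < s / Real.exp 1 := by positivity
    rw [Real.rpow_def_of_pos hse, Real.log_div hs.ne' (Real.exp_ne_zero 1),
      Real.log_exp, one_div, ← Real.exp_log (show (0:ℝ) < (s+1)⁻¹ by positivity),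
      Real.exp_le_exp, Real.log_inv]
    have hlog1 : Real.log (s + 1) ≤ s := by
      have := Real.log_le_sub_one_of_pos (show (0:ℝ) < s + 1 by linarith)
      linarith
    have hlogs : Real.log s ≤ 0 := Real.log_nonpos hs.le hs1
    nlinarith [hs.le]
  | succ n ih =>
    intro s hs hsle
    by_cases hc : s ≤ n + 1
    · exact ih s hs hc
    push_cast at hsle
    have h1 : 1 < s := by
      have hn := Nat.cast_nonneg (α := ℝ) n
      linarith [not_le.mp hc]
    have ht : 0 < s - 1 := by linarith
    have ihs := ih (s - 1) ht (by push_cast at hsle ⊢; linarith)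
    have hΓ : Real.Gamma (1 + s) = s * Real.Gamma (1 + (s - 1)) := by
      rw [show 1 + (s - 1) = s by ring, add_comm, Real.Gamma_add_one (by linarith)]
    rw [hΓ]
    have key : (s / Real.exp 1) ^ s ≤ s * ((s - 1) / Real.exp 1) ^ (s - 1) := by
      have hse : 0 < s / Real.exp 1 := by positivity
      have hte : 0 < (s - 1) / Real.exp 1 := by positivity
      have heq : s * Real.exp (Real.log ((s - 1) / Real.exp 1) * (s - 1))
          = Real.exp (Real.log s + Real.log ((s - 1) / Real.exp 1) * (s - 1)) := by
        rw [Real.exp_add, Real.exp_log (show (0:ℝ) < s by linarith)]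
      rw [Real.rpow_def_of_pos hse, Real.rpow_def_of_pos hte, heq, Real.exp_le_exp,
        Real.log_div (show s ≠ 0 by linarith) (Real.exp_ne_zero 1),
        Real.log_div (show s - 1 ≠ 0 by linarith) (Real.exp_ne_zero 1), Real.log_exp]
      have hlog : Real.log s - Real.log (s - 1) ≤ 1 / (s - 1) := by
        rw [← Real.log_div (by linarith) (by linarith)]
        have := Real.log_le_sub_one_of_pos (show (0:ℝ) < s / (s - 1) by positivity)
        have : Real.log (s / (s-1)) ≤ s / (s-1) - 1 := this
        have heq : s / (s - 1) - 1 = 1 / (s - 1) := by field_simp; ring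
        linarith [heq ▸ this]
      have h2 : (s - 1) * (Real.log s - Real.log (s - 1)) ≤ 1 := by
        have := mul_le_mul_of_nonneg_left hlog ht.le
        rwa [mul_one_div, div_self ht.ne'] at this
      nlinarith
    calc (s / Real.exp 1) ^ s ≤ s * ((s - 1) / Real.exp 1) ^ (s - 1) := key
      _ ≤ s * Real.Gamma (1 + (s - 1)) :=
          mul_le_mul_of_nonneg_left ihs (by linarith)

private lemma gamma_ge {s : ℝ} (hs : 0 < s) : (s / Real.exp 1) ^ s ≤ Real.Gamma (1 + s) :=
  gamma_ge_aux ⌈s⌉₊ s hs (le_trans (Nat.le_ceil s) (by linarith))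

/-- Volume bounds for the unit ball of `ℓ_{2m}^d`. -/
theorem stmt5 {d m : ℕ} (hd : 1 ≤ d) (hm : 1 ≤ m) :
    ENNReal.ofReal (2 ^ d * (Real.exp 1 * ((d : ℝ) + 2 * m)) ^ (-(d : ℝ) / (2 * m)))
      ≤ volume {x : Fin d → ℝ | ∑ j, |x j| ^ (2 * m) ≤ 1}
    ∧ volume {x : Fin d → ℝ | ∑ j, |x j| ^ (2 * m) ≤ 1}
      ≤ ENNReal.ofReal (2 ^ d * (2 * Real.exp 1 * m / d) ^ ((d : ℝ) / (2 * m))) := by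
  have : Nonempty (Fin d) := ⟨⟨0, hd⟩⟩
  set p : ℝ := ((2 * m : ℕ) : ℝ) with hp_def
  have hp2 : p = 2 * (m : ℝ) := by push_cast [hp_def]; ring
  have hp1 : 1 ≤ p := by
    rw [hp2]; have : (1:ℝ) ≤ (m:ℝ) := by exact_mod_cast hm
    linarith
  have hp0 : 0 < p := by linarith
  have hd0 : 0 < (d : ℝ) := by exact_mod_cast hd
  -- the set, rewritten with real exponents
  have hset : {x : Fin d → ℝ | ∑ j, |x j| ^ (2 * m) ≤ 1}
      = {x : Fin d → ℝ | (∑ j, |x j| ^ p) ^ (1 / p) ≤ 1} := by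
    ext x
    have hsum : ∑ j, |x j| ^ (2 * m) = ∑ j, |x j| ^ p := by
      refine Finset.sum_congr rfl fun j _ => ?_
      rw [hp_def, Real.rpow_natCast]
    have hnn : 0 ≤ ∑ j, |x j| ^ p := by
      refine Finset.sum_nonneg fun j _ => Real.rpow_nonneg (abs_nonneg _) _
    simp only [Set.mem_setOf_eq, hsum]
    constructor
    · intro h; exact Real.rpow_le_one hnn h (by positivity)
    · intro h
      have := Real.rpow_le_rpow (Real.rpow_nonneg hnn _) h (le_of_lt hp0)
      rwa [← Real.rpow_mul hnn, one_div, inv_mul_cancel₀ hp0.ne',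
        Real.rpow_one, Real.one_rpow] at this
  set s : ℝ := (d : ℝ) / p with hs_def
  have hs0 : 0 < s := by positivity
  have hvol := MeasureTheory.volume_sum_rpow_le (ι := Fin d) hp1 1
  rw [Fintype.card_fin] at hvol
  have hΓlow : (s / Real.exp 1) ^ s ≤ Real.Gamma ((d : ℝ) / p + 1) := by
    rw [add_comm]; exact gamma_ge hs0
  have hΓpos : 0 < Real.Gamma ((d : ℝ) / p + 1) := by
    apply Real.Gamma_pos_of_pos; positivity
  constructor
  · -- lower bound via the inscribed cube
    set r : ℝ := (d : ℝ) ^ (-(1 / p)) with hr_def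
    have hr0 : 0 < r := Real.rpow_pos_of_pos hd0 _
    have hrp : r ^ (2 * m) = (d : ℝ)⁻¹ := by
      rw [hr_def, ← Real.rpow_natCast ((d:ℝ) ^ (-(1/p))) (2*m), ← Real.rpow_mul hd0.le,
        ← hp_def, neg_mul, one_div, inv_mul_cancel₀ hp0.ne', Real.rpow_neg_one]
    have hsub : (Set.pi Set.univ fun _ : Fin d => Set.Icc (-r) r)
        ⊆ {x : Fin d → ℝ | ∑ j, |x j| ^ (2 * m) ≤ 1} := by
      intro x hx
      simp only [Set.mem_setOf_eq]
      have hbd : ∀ j, |x j| ^ (2 * m) ≤ (d : ℝ)⁻¹ := by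
        intro j
        have hj := hx j (Set.mem_univ j)
        have : |x j| ≤ r := abs_le.mpr ⟨hj.1, hj.2⟩
        calc |x j| ^ (2 * m) ≤ r ^ (2 * m) := pow_le_pow_left₀ (abs_nonneg _) this _
          _ = (d : ℝ)⁻¹ := hrp
      calc ∑ j, |x j| ^ (2 * m) ≤ ∑ _j : Fin d, (d : ℝ)⁻¹ :=
            Finset.sum_le_sum fun j _ => hbd j
        _ = 1 := by
            rw [Finset.sum_const, Finset.card_univ, Fintype.card_fin, nsmul_eq_mul,
              mul_inv_cancel₀ hd0.ne']
    have hcube : volume (Set.pi Set.univ fun _ : Fin d => Set.Icc (-r) r)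
        = ENNReal.ofReal ((2 * r) ^ d) := by
      rw [volume_pi_pi, Real.volume_Icc, ENNReal.ofReal_pow (by linarith)]
      simp only [Finset.prod_const, Finset.card_univ, Fintype.card_fin]
      congr 1
      ring_nf
    refine le_trans ?_ (le_trans (le_of_eq hcube.symm) (measure_mono hsub))
    apply ENNReal.ofReal_le_ofReal
    have hrd : (2 * r) ^ d = 2 ^ d * (d : ℝ) ^ (-((d:ℝ)/p)) := by
      rw [mul_pow, hr_def, ← Real.rpow_natCast ((d:ℝ) ^ (-(1/p))) d, ← Real.rpow_mul hd0.le]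
      congr 2
      field_simp
    rw [hrd]
    have hbase : (d : ℝ) ≤ Real.exp 1 * ((d : ℝ) + 2 * m) := by
      have he : (1 : ℝ) ≤ Real.exp 1 := by
        have := Real.add_one_le_exp (1 : ℝ); linarith
      have hm0 : (0 : ℝ) ≤ (m : ℝ) := Nat.cast_nonneg m
      nlinarith
    have hexp : (Real.exp 1 * ((d : ℝ) + 2 * m)) ^ (-(d : ℝ) / (2 * m))
        ≤ (d : ℝ) ^ (-((d:ℝ)/p)) := by
      have : -(d : ℝ) / (2 * m) = -((d:ℝ)/p) := by rw [hp2]; ring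
      rw [this]
      exact Real.rpow_le_rpow_of_nonpos hd0 hbase (neg_nonpos.mpr (by positivity))
    have h2d : (0:ℝ) ≤ 2 ^ d := by positivity
    exact mul_le_mul_of_nonneg_left hexp h2d
  · -- upper bound via the Gamma formula
    rw [hset, hvol]
    simp only [ENNReal.ofReal_one, one_pow, one_mul]
    apply ENNReal.ofReal_le_ofReal
    have hΓ1 : Real.Gamma (1 / p + 1) ≤ 1 := by
      rw [add_comm]
      exact gamma_le_one (by positivity) (by rw [div_le_one hp0]; linarith)
    have hnum : (2 * Real.Gamma (1 / p + 1)) ^ d ≤ 2 ^ d := by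
      apply pow_le_pow_left₀
      · have := Real.Gamma_pos_of_pos (show (0:ℝ) < 1/p + 1 by positivity); positivity
      · linarith
    have hpow : 0 < (s / Real.exp 1) ^ s := Real.rpow_pos_of_pos (by positivity) _
    calc (2 * Real.Gamma (1 / p + 1)) ^ d / Real.Gamma ((d:ℝ) / p + 1)
        ≤ 2 ^ d / (s / Real.exp 1) ^ s := by
          apply div_le_div₀ (by positivity) hnum hpow hΓlow
      _ = 2 ^ d * (2 * Real.exp 1 * m / d) ^ ((d : ℝ) / (2 * m)) := by
          rw [div_eq_mul_inv, ← Real.inv_rpow (by positivity : (0:ℝ) ≤ s / Real.exp 1), inv_div]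
          rw [hs_def, hp2]
          congr 1
          field_simp
end

section
/- For every fixed natural number $m \ge 1$, $\lim_{d \to \infty} \sqrt{d} \cdot (\mathrm{vol}\,B_{2m}^d)^{m/d} = 2^m \sqrt{2em}\, \Gamma(1 + \tfrac{1}{2m})^m$, where $B_{2m}^d = \{x \in \mathbb{R}^d : \sum_{j=1}^d |x_j|^{2m} \le 1\}$. -/
open MeasureTheory

section Aux
open Filter Real

lemma fact_asymp : Filter.Tendsto (fun n : ℕ => Real.log n.factorial / n - Real.log n)
    atTop (nhds (-1)) := by
  have hs := Stirling.tendsto_stirlingSeq_sqrt_pi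
  have hlogs : Tendsto (fun n => Real.log (Stirling.stirlingSeq n)) atTop (nhds (Real.log (Real.sqrt π))) :=
    (Real.continuousAt_log (by positivity)).tendsto.comp hs
  have hnat : Tendsto (fun n : ℕ => (n : ℝ)) atTop atTop := tendsto_natCast_atTop_atTop
  have h1 : Tendsto (fun n : ℕ => Real.log (Stirling.stirlingSeq n) / n) atTop (nhds 0) :=
    Tendsto.div_atTop hlogs hnat
  have h2 : Tendsto (fun n : ℕ => Real.log n / n) atTop (nhds 0) :=
    Real.isLittleO_log_id_atTop.tendsto_div_nhds_zero.comp hnat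
  have h3 : Tendsto (fun n : ℕ => Real.log 2 / (n : ℝ)) atTop (nhds 0) :=
    Tendsto.div_atTop tendsto_const_nhds hnat
  have key : ∀ᶠ n : ℕ in atTop, Real.log n.factorial / n - Real.log n =
      Real.log (Stirling.stirlingSeq n) / n + (Real.log 2 / n / 2 + Real.log n / n / 2) - 1 := by
    filter_upwards [eventually_ge_atTop 1] with n hn
    have hn0 : (0:ℝ) < n := by exact_mod_cast hn
    have hsp : 0 < Stirling.stirlingSeq n := by
      have := Stirling.stirlingSeq'_pos (n - 1)
      rwa [Nat.sub_add_cancel hn] at this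
    have hpow : (0:ℝ) < ((n : ℝ) / Real.exp 1) ^ n := by positivity
    have hsq : (0:ℝ) < Real.sqrt (2 * n) := by positivity
    have hfact : (n.factorial : ℝ) = Stirling.stirlingSeq n * (Real.sqrt (2 * n) * ((n : ℝ) / Real.exp 1) ^ n) := by
      rw [Stirling.stirlingSeq]
      field_simp
    have hlog : Real.log n.factorial = Real.log (Stirling.stirlingSeq n)
        + ((Real.log 2 + Real.log n) / 2 + (n * Real.log n - n)) := by
      rw [hfact, Real.log_mul hsp.ne' (by positivity), Real.log_mul hsq.ne' hpow.ne',
        Real.log_sqrt (by positivity), Real.log_mul two_ne_zero hn0.ne', Real.log_pow,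
        Real.log_div hn0.ne' (Real.exp_pos 1).ne', Real.log_exp]
      ring
    rw [hlog]; field_simp; ring
  have H := ((h1.add (h3.div_const 2 |>.add (h2.div_const 2))).sub_const 1)
  simp only [zero_add, add_zero, zero_div, zero_sub] at H
  exact H.congr' (key.mono fun n h => h.symm)

lemma aux_tendsto_shift : Filter.Tendsto (fun n : ℕ => Real.log (n+1) / ((n:ℝ)+1)) atTop (nhds 0) := by
  have hnat : Tendsto (fun n : ℕ => ((n:ℝ)+1)) atTop atTop :=
    tendsto_natCast_atTop_atTop.atTop_add tendsto_const_nhds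
  exact Real.isLittleO_log_id_atTop.tendsto_div_nhds_zero.comp hnat

lemma lower_asymp : Filter.Tendsto (fun n : ℕ =>
    Real.log n.factorial / ((n:ℝ)+1) - Real.log ((n:ℝ)+1)) atTop (nhds (-1)) := by
  have hA : Tendsto (fun n : ℕ => Real.log (n+1).factorial / ((n:ℝ)+1) - Real.log ((n:ℝ)+1))
      atTop (nhds (-1)) := by
    have := fact_asymp.comp (tendsto_add_atTop_nat 1)
    refine this.congr fun n => ?_
    simp only [Function.comp]
    push_cast
    ring_nf
  have H := hA.sub aux_tendsto_shift
  have : ∀ n : ℕ, Real.log n.factorial / ((n:ℝ)+1) - Real.log ((n:ℝ)+1) =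
      (Real.log (n+1).factorial / ((n:ℝ)+1) - Real.log ((n:ℝ)+1)) - Real.log (n+1) / ((n:ℝ)+1) := by
    intro n
    have : ((n+1).factorial : ℝ) = ((n:ℝ)+1) * n.factorial := by
      rw [Nat.factorial_succ]; push_cast; ring
    rw [this, Real.log_mul (by positivity) (by positivity : (0:ℝ) < (n.factorial:ℝ)).ne']
    ring
  simp only [this]
  simpa using H

lemma upper_asymp : Filter.Tendsto (fun n : ℕ =>
    Real.log (n+1).factorial / (n:ℝ) - Real.log (n:ℝ)) atTop (nhds (-1)) := by
  have hq : Tendsto (fun n : ℕ => ((n:ℝ)+1) / n) atTop (nhds 1) := by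
    have h := tendsto_natCast_atTop_atTop (R := ℝ)
    have H := (tendsto_const_nhds (x := (1:ℝ)) (f := atTop (α := ℕ))).add
      (Tendsto.div_atTop (tendsto_const_nhds (x := (1:ℝ))) h)
    rw [add_zero] at H
    refine H.congr' ?_
    filter_upwards [eventually_ge_atTop 1] with n hn
    have hn0 : (0:ℝ) < n := by exact_mod_cast hn
    field_simp
  have hmul : Tendsto (fun n : ℕ => Real.log (n+1) / ((n:ℝ)+1) * (((n:ℝ)+1) / n)) atTop (nhds 0) := by
    simpa using aux_tendsto_shift.mul hq
  have H := fact_asymp.add hmul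
  rw [add_zero] at H
  refine H.congr' ?_
  filter_upwards [eventually_ge_atTop 1] with n hn
  have hn0 : (0:ℝ) < n := by exact_mod_cast hn
  have hf : ((n+1).factorial : ℝ) = ((n:ℝ)+1) * n.factorial := by
    rw [Nat.factorial_succ]; push_cast; ring
  rw [hf, Real.log_mul (by positivity) (by positivity : (0:ℝ) < (n.factorial:ℝ)).ne']
  field_simp
  ring

lemma gamma_asymp : Filter.Tendsto
    (fun x : ℝ => Real.log (Real.Gamma (x+1)) / x - Real.log x) atTop (nhds (-1)) := by
  have hlow : Tendsto (fun x : ℝ =>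
      Real.log (Nat.floor x).factorial / ((Nat.floor x : ℝ)+1) - Real.log ((Nat.floor x : ℝ)+1))
      atTop (nhds (-1)) := lower_asymp.comp tendsto_nat_floor_atTop
  have hup : Tendsto (fun x : ℝ =>
      Real.log ((Nat.floor x)+1).factorial / (Nat.floor x : ℝ) - Real.log (Nat.floor x : ℝ))
      atTop (nhds (-1)) := upper_asymp.comp tendsto_nat_floor_atTop
  refine tendsto_of_tendsto_of_tendsto_of_le_of_le' hlow hup ?_ ?_
  · filter_upwards [eventually_ge_atTop (2:ℝ)] with x hx
    set n := Nat.floor x with hn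
    have hx0 : (0:ℝ) < x := by linarith
    have hn2 : 2 ≤ n := Nat.le_floor (by exact_mod_cast hx)
    have hnx : (n:ℝ) ≤ x := Nat.floor_le hx0.le
    have hxn : x < (n:ℝ) + 1 := Nat.lt_floor_add_one x
    have hn0 : (0:ℝ) < n := by positivity
    have hfac1 : (1:ℝ) ≤ (n.factorial : ℝ) := by exact_mod_cast Nat.one_le_iff_ne_zero.mpr n.factorial_ne_zero
    have hgam : (n.factorial : ℝ) ≤ Real.Gamma (x+1) := by
      have hn2' : (2:ℝ) ≤ n := by exact_mod_cast hn2
      have := Real.Gamma_strictMonoOn_Ici.monotoneOn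
        (a := (n:ℝ)+1) (b := x+1) (Set.mem_Ici.mpr (by linarith)) (Set.mem_Ici.mpr (by linarith)) (by linarith)
      rwa [show ((n:ℝ)+1) = ((n:ℕ):ℝ)+1 by norm_num, Real.Gamma_nat_eq_factorial] at this
    have hlogfac : (0:ℝ) ≤ Real.log n.factorial := Real.log_nonneg hfac1
    have h1 : Real.log n.factorial / ((n:ℝ)+1) ≤ Real.log n.factorial / x := by
      gcongr
    have h2 : Real.log n.factorial / x ≤ Real.log (Real.Gamma (x+1)) / x := by
      have := Real.log_le_log (by linarith : (0:ℝ) < n.factorial) hgam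
      gcongr
    have h3 : Real.log x ≤ Real.log ((n:ℝ)+1) := Real.log_le_log hx0 hxn.le
    linarith
  · filter_upwards [eventually_ge_atTop (2:ℝ)] with x hx
    set n := Nat.floor x with hn
    have hx0 : (0:ℝ) < x := by linarith
    have hn2 : 2 ≤ n := Nat.le_floor (by exact_mod_cast hx)
    have hnx : (n:ℝ) ≤ x := Nat.floor_le hx0.le
    have hxn : x < (n:ℝ) + 1 := Nat.lt_floor_add_one x
    have hn0 : (0:ℝ) < n := by positivity
    have hgam0 : 0 < Real.Gamma (x+1) := Real.Gamma_pos_of_pos (by linarith)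
    have hgam : Real.Gamma (x+1) ≤ ((n+1).factorial : ℝ) := by
      have hn2' : (2:ℝ) ≤ n := by exact_mod_cast hn2
      have := Real.Gamma_strictMonoOn_Ici.monotoneOn
        (a := x+1) (b := (n:ℝ)+2) (Set.mem_Ici.mpr (by linarith)) (Set.mem_Ici.mpr (by linarith)) (by linarith)
      rwa [show ((n:ℝ)+2) = (((n+1):ℕ):ℝ)+1 by push_cast; ring, Real.Gamma_nat_eq_factorial] at this
    have hfac1 : (1:ℝ) ≤ ((n+1).factorial : ℝ) := by exact_mod_cast Nat.one_le_iff_ne_zero.mpr (n+1).factorial_ne_zero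
    have h1 : Real.log (Real.Gamma (x+1)) / x ≤ Real.log ((n+1).factorial : ℝ) / x := by
      have := Real.log_le_log hgam0 hgam
      gcongr
    have h2 : Real.log ((n+1).factorial : ℝ) / x ≤ Real.log ((n+1).factorial : ℝ) / n := by
      have := Real.log_nonneg hfac1
      gcongr
    have h3 : Real.log (n:ℝ) ≤ Real.log x := Real.log_le_log hn0 hnx
    push_cast at h1 h2 ⊢
    linarith

lemma vol_eq (m d : ℕ) (hm : 1 ≤ m) (hd : 1 ≤ d) :
    (MeasureTheory.volume {x : Fin d → ℝ | ∑ j, |x j| ^ (2 * m) ≤ 1}).toReal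
      = (2 * Real.Gamma (1/(2*(m:ℝ)) + 1)) ^ d / Real.Gamma ((d:ℝ)/(2*(m:ℝ)) + 1) := by
  have : Nonempty (Fin d) := ⟨⟨0, hd⟩⟩
  have hm0 : (0:ℝ) < m := by exact_mod_cast hm
  set p : ℝ := 2*(m:ℝ) with hp
  have hp0 : 0 < p := by positivity
  have hm1 : (1:ℝ) ≤ m := by exact_mod_cast hm
  have hp1 : 1 ≤ p := by rw [hp]; linarith
  have hset : {x : Fin d → ℝ | ∑ j, |x j| ^ (2 * m) ≤ 1}
      = {x : Fin d → ℝ | (∑ j, |x j| ^ p) ^ (1/p) ≤ 1} := by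
    ext x
    simp only [Set.mem_setOf_eq]
    have hterm : ∀ j, |x j| ^ (2 * m) = |x j| ^ p := by
      intro j
      rw [hp, show (2*(m:ℝ)) = ((2*m : ℕ) : ℝ) by push_cast; ring, Real.rpow_natCast]
    simp_rw [← hterm] at *
    set S := ∑ j, |x j| ^ (2*m) with hS
    have hS0 : 0 ≤ S := Finset.sum_nonneg fun j _ => by positivity
    constructor
    · intro h
      exact Real.rpow_le_one hS0 h (by positivity)
    · intro h
      have : (S ^ (1/p)) ^ p ≤ 1 := Real.rpow_le_one (Real.rpow_nonneg hS0 _) h hp0.le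
      rwa [← Real.rpow_mul hS0, one_div_mul_cancel hp0.ne', Real.rpow_one] at this
  rw [hset, MeasureTheory.volume_sum_rpow_le (Fin d) hp1 1]
  have hΓ1 : 0 < Real.Gamma (1/p + 1) := Real.Gamma_pos_of_pos (by positivity)
  have hΓ2 : 0 < Real.Gamma ((Fintype.card (Fin d) : ℝ)/p + 1) := Real.Gamma_pos_of_pos (by positivity)
  rw [ENNReal.ofReal_one, one_pow, one_mul, ENNReal.toReal_ofReal (by positivity)]
  simp [Fintype.card_fin]
end Aux

/-- Limit of `√d · (vol B_{2m}^d)^{m/d}` as `d → ∞`. -/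
theorem stmt6 (m : ℕ) (hm : 1 ≤ m) :
    Filter.Tendsto
      (fun d : ℕ => Real.sqrt d *
        ((volume {x : Fin d → ℝ | ∑ j, |x j| ^ (2 * m) ≤ 1}).toReal ^ ((m : ℝ) / d)))
      Filter.atTop
      (nhds (2 ^ m * Real.sqrt (2 * Real.exp 1 * m)
        * Real.Gamma (1 + 1 / (2 * m)) ^ m)) := by
  have hm0 : (0:ℝ) < m := by exact_mod_cast hm
  set A : ℝ := 2 * Real.Gamma (1/(2*(m:ℝ)) + 1) with hA
  have hA0 : 0 < A := by
    have := Real.Gamma_pos_of_pos (show (0:ℝ) < 1/(2*(m:ℝ)) + 1 by positivity)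
    positivity
  -- the exponent sequence
  set E : ℕ → ℝ := fun d => (m:ℝ) * Real.log A + Real.log (2*(m:ℝ)) / 2
    - (Real.log (Real.Gamma ((d:ℝ)/(2*(m:ℝ)) + 1)) / ((d:ℝ)/(2*(m:ℝ)))
        - Real.log ((d:ℝ)/(2*(m:ℝ)))) / 2 with hE
  have hxd : Filter.Tendsto (fun d : ℕ => (d:ℝ)/(2*(m:ℝ))) Filter.atTop Filter.atTop :=
    Filter.Tendsto.atTop_div_const (by positivity) tendsto_natCast_atTop_atTop
  have hEL : Filter.Tendsto E Filter.atTop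
      (nhds ((m:ℝ) * Real.log A + Real.log (2*(m:ℝ)) / 2 - (-1)/2)) := by
    exact Filter.Tendsto.sub tendsto_const_nhds (((gamma_asymp.comp hxd)).div_const 2)
  have hexp : Filter.Tendsto (fun d => Real.exp (E d)) Filter.atTop
      (nhds (Real.exp ((m:ℝ) * Real.log A + Real.log (2*(m:ℝ)) / 2 - (-1)/2))) :=
    (Real.continuous_exp.tendsto _).comp hEL
  have hval : Real.exp ((m:ℝ) * Real.log A + Real.log (2*(m:ℝ)) / 2 - (-1)/2)
      = 2 ^ m * Real.sqrt (2 * Real.exp 1 * m) * Real.Gamma (1 + 1 / (2 * (m:ℝ))) ^ m := by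
    have h1 : Real.exp ((m:ℝ) * Real.log A) = A ^ m := by
      rw [← Real.log_pow, Real.exp_log (by positivity)]
    have h2 : Real.exp (Real.log (2*(m:ℝ)) / 2) = Real.sqrt (2*(m:ℝ)) := by
      rw [Real.sqrt_eq_rpow, Real.rpow_def_of_pos (by positivity)]
      ring_nf
    have h3 : Real.exp ((1:ℝ)/2) = Real.sqrt (Real.exp 1) := by
      rw [Real.sqrt_eq_rpow, Real.exp_one_rpow]
    have hsplit : Real.sqrt (2 * Real.exp 1 * m) = Real.sqrt (2*(m:ℝ)) * Real.sqrt (Real.exp 1) := by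
      rw [← Real.sqrt_mul (by positivity)]
      ring_nf
    rw [show (m:ℝ) * Real.log A + Real.log (2*(m:ℝ)) / 2 - (-1)/2
        = (m:ℝ) * Real.log A + (Real.log (2*(m:ℝ)) / 2 + 1/2) by ring,
      Real.exp_add, Real.exp_add, h1, h2, show (1:ℝ)/2 = (1:ℝ)/2 by rfl, h3, hsplit, hA,
      mul_pow, show 1 + 1/(2*(m:ℝ)) = 1/(2*(m:ℝ)) + 1 by ring]
    ring
  rw [show (2:ℝ) ^ m * Real.sqrt (2 * Real.exp 1 * m) * Real.Gamma (1 + 1 / (2 * (m:ℝ))) ^ m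
      = Real.exp ((m:ℝ) * Real.log A + Real.log (2*(m:ℝ)) / 2 - (-1)/2) from hval.symm]
  refine hexp.congr' ?_
  filter_upwards [Filter.eventually_ge_atTop 1] with d hd
  have hd0 : (0:ℝ) < d := by exact_mod_cast hd
  have hΓ : 0 < Real.Gamma ((d:ℝ)/(2*(m:ℝ)) + 1) := Real.Gamma_pos_of_pos (by positivity)
  rw [vol_eq m d hm hd]
  rw [Real.rpow_def_of_pos (by positivity), show Real.sqrt d = Real.exp (Real.log d * (1/2)) by
      rw [Real.sqrt_eq_rpow, Real.rpow_def_of_pos hd0], ← Real.exp_add]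
  congr 1
  rw [Real.log_div (by positivity) hΓ.ne', Real.log_pow]
  simp only [hE]
  have hlogx : Real.log ((d:ℝ)/(2*(m:ℝ))) = Real.log d - Real.log (2*(m:ℝ)) :=
    Real.log_div hd0.ne' (by positivity)
  rw [hlogx]
  set g := Real.log (Real.Gamma ((d:ℝ)/(2*(m:ℝ)) + 1)) with hg
  set a := Real.log A with ha

  field_simp
  ring
end

section
/- For all natural numbers $m, d \ge 1$, $(\mathrm{vol}\,B_{2m}^d)^{m/d} \le 2^m (2em/d)^{1/2}$, where $B_{2m}^d = \{z \in \mathbb{R}^d : \sum_{j=1}^d |z_j|^{2m} \le 1\}$ and $\mathrm{vol}$ is Lebesgue measure. -/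
open MeasureTheory
open Real Set

theorem gamma_lb {s : ℝ} (hs : 0 < s) : s ^ s * Real.exp (-s) ≤ Real.Gamma (s + 1) := by
  have hint : IntegrableOn (fun x : ℝ => Real.exp (-x) * x ^ s) (Ioi 0) := by
    simpa using Real.GammaIntegral_convergent (by linarith : (0:ℝ) < s + 1)
  have hint' : IntegrableOn (fun x : ℝ => Real.exp (-x) * x ^ s) (Ioi s) :=
    hint.mono_set (Ioi_subset_Ioi hs.le)
  have h1 : Real.Gamma (s + 1) = ∫ x in Ioi 0, Real.exp (-x) * x ^ s := by
    rw [Real.Gamma_eq_integral (by linarith)]; simp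
  rw [h1]
  have h2 : (∫ x in Ioi s, Real.exp (-x) * x ^ s) ≤ ∫ x in Ioi 0, Real.exp (-x) * x ^ s := by
    apply setIntegral_mono_set hint
    · filter_upwards [ae_restrict_mem measurableSet_Ioi] with x hx using
        mul_nonneg (Real.exp_pos _).le (Real.rpow_nonneg (le_of_lt hx) _)
    · exact HasSubset.Subset.eventuallyLE (Ioi_subset_Ioi hs.le)
  refine le_trans ?_ h2
  have h3 : (∫ x in Ioi s, Real.exp (-x) * s ^ s) ≤ ∫ x in Ioi s, Real.exp (-x) * x ^ s := by
    apply setIntegral_mono_on _ hint' measurableSet_Ioi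
    · intro x hx
      exact mul_le_mul_of_nonneg_left
        (Real.rpow_le_rpow hs.le (le_of_lt hx) hs.le) (Real.exp_pos _).le
    · have := exp_neg_integrableOn_Ioi s (zero_lt_one (α := ℝ))
      simpa [IntegrableOn] using this.mul_const (s ^ s)
  calc s ^ s * Real.exp (-s) = ∫ x in Ioi s, Real.exp (-x) * s ^ s := by
        rw [integral_mul_const, integral_exp_neg_Ioi]; ring
    _ ≤ _ := h3

theorem gamma_ub {t : ℝ} (ht0 : 0 ≤ t) (ht1 : t ≤ 1) : Real.Gamma (1 + t) ≤ 1 := by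
  have h := Real.convexOn_Gamma.2 (Set.mem_Ioi.mpr one_pos) (Set.mem_Ioi.mpr two_pos)
    (by linarith : (0:ℝ) ≤ 1 - t) ht0 (by ring)
  rw [Real.Gamma_one, Real.Gamma_two] at h
  calc Real.Gamma (1 + t) = Real.Gamma ((1-t) • (1:ℝ) + t • (2:ℝ)) := by norm_num; ring_nf
    _ ≤ (1-t) * 1 + t * 1 := h
    _ = 1 := by ring

/-- Upper volume estimate `(vol B_{2m}^d)^{m/d} ≤ 2^m (2em/d)^{1/2}`. -/
theorem stmt7 {m d : ℕ} (hm : 1 ≤ m) (hd : 1 ≤ d) :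
    (volume {z : Fin d → ℝ | ∑ j, |z j| ^ (2 * m) ≤ 1}).toReal ^ ((m : ℝ) / d)
      ≤ 2 ^ m * Real.sqrt (2 * Real.exp 1 * m / d) := by
  haveI : Nonempty (Fin d) := Fin.pos_iff_nonempty.mp hd
  set p : ℝ := 2 * m with hpdef
  have hm' : (1:ℝ) ≤ m := by exact_mod_cast hm
  have hd' : (1:ℝ) ≤ d := by exact_mod_cast hd
  have hp1 : (1:ℝ) ≤ p := by simp only [hpdef]; linarith
  have hp0 : (0:ℝ) < p := by linarith
  have hset : {z : Fin d → ℝ | ∑ j, |z j| ^ (2 * m) ≤ 1}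
      = {x : Fin d → ℝ | (∑ i, |x i| ^ p) ^ (1 / p) ≤ (1:ℝ)} := by
    ext z
    have hS : (0:ℝ) ≤ ∑ i, |z i| ^ p :=
      Finset.sum_nonneg fun i _ => Real.rpow_nonneg (abs_nonneg _) _
    have hpow : ∀ i, |z i| ^ (2 * m) = |z i| ^ p := by
      intro i
      rw [hpdef, ← Real.rpow_natCast (|z i|) (2 * m)]
      norm_num
    simp only [Set.mem_setOf_eq, hpow]
    constructor
    · intro h
      exact Real.rpow_le_one hS h (by positivity)
    · intro h
      by_contra hc
      push_neg at hc
      have h1 : (1:ℝ) < (∑ i, |z i| ^ p) ^ (1 / p) :=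
        (Real.one_lt_rpow_iff_of_pos (by linarith)).mpr (Or.inl ⟨hc, by positivity⟩)
      linarith
  rw [hset, MeasureTheory.volume_sum_rpow_le (Fin d) hp1 1, Fintype.card_fin,
    ENNReal.ofReal_one, one_pow, one_mul]
  have hs0 : (0:ℝ) < (d:ℝ) / p := by positivity
  have hGd : ((d:ℝ)/p) ^ ((d:ℝ)/p) * Real.exp (-((d:ℝ)/p)) ≤ Real.Gamma ((d:ℝ)/p + 1) :=
    gamma_lb hs0
  have hGdpos : 0 < Real.Gamma ((d:ℝ)/p + 1) := Real.Gamma_pos_of_pos (by positivity)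
  have hG1pos : 0 < Real.Gamma (1/p + 1) := Real.Gamma_pos_of_pos (by positivity)
  have hG1le : Real.Gamma (1/p + 1) ≤ 1 := by
    rw [add_comm]
    exact gamma_ub (by positivity) (by rw [div_le_one hp0]; linarith)
  have hV0 : (0:ℝ) ≤ (2 * Real.Gamma (1/p + 1)) ^ d / Real.Gamma ((d:ℝ)/p + 1) := by positivity
  rw [ENNReal.toReal_ofReal hV0]
  set E : ℝ := (Real.exp 1 / ((d:ℝ)/p)) ^ ((d:ℝ)/p) with hEdef
  have hEpos : 0 < E := by positivity
  have hinv : E⁻¹ = ((d:ℝ)/p) ^ ((d:ℝ)/p) * Real.exp (-((d:ℝ)/p)) := by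
    rw [hEdef, ← Real.inv_rpow (by positivity), inv_div,
      Real.div_rpow hs0.le (Real.exp_pos 1).le, Real.exp_one_rpow, Real.exp_neg,
      div_eq_mul_inv]
  have hkey : (2 * Real.Gamma (1/p + 1)) ^ d / Real.Gamma ((d:ℝ)/p + 1) ≤ 2 ^ d * E := by
    rw [div_le_iff₀ hGdpos]
    have h1 : (2 * Real.Gamma (1/p + 1)) ^ d ≤ 2 ^ d :=
      pow_le_pow_left₀ (by positivity) (by linarith) d
    have h2 : (1:ℝ) ≤ E * Real.Gamma ((d:ℝ)/p + 1) := by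
      calc (1:ℝ) = E * E⁻¹ := (mul_inv_cancel₀ hEpos.ne').symm
        _ ≤ E * Real.Gamma ((d:ℝ)/p + 1) := by
            rw [hinv]; exact mul_le_mul_of_nonneg_left hGd hEpos.le
    calc (2 * Real.Gamma (1/p + 1)) ^ d ≤ 2 ^ d * 1 := by rw [mul_one]; exact h1
      _ ≤ 2 ^ d * (E * Real.Gamma ((d:ℝ)/p + 1)) := by
          exact mul_le_mul_of_nonneg_left h2 (by positivity)
      _ = 2 ^ d * E * Real.Gamma ((d:ℝ)/p + 1) := by ring
  have hmd0 : (0:ℝ) ≤ (m:ℝ)/d := by positivity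
  refine le_trans (Real.rpow_le_rpow hV0 hkey hmd0) ?_
  rw [Real.mul_rpow (by positivity) hEpos.le]
  have e1 : ((2:ℝ) ^ d) ^ ((m:ℝ)/d) = 2 ^ m := by
    rw [← Real.rpow_natCast 2 d, ← Real.rpow_mul (by norm_num), ← Real.rpow_natCast 2 m]
    congr 1
    field_simp
  have e2 : E ^ ((m:ℝ)/d) = Real.sqrt (2 * Real.exp 1 * m / d) := by
    rw [hEdef, ← Real.rpow_mul (by positivity)]
    have hhalf : (d:ℝ)/p * ((m:ℝ)/d) = 1/2 := by
      rw [hpdef]; field_simp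
    rw [hhalf, Real.sqrt_eq_rpow]
    congr 1
    rw [hpdef]; field_simp
  rw [e1, e2]
end

section
/- Let $m, d \ge 1$ and let $(\mu_n)_{n \ge 1}$ be a non-decreasing sequence of non-negative reals satisfying $(\tfrac{\pi}{L}(n - m))^{2m} \le \mu_n \le (\tfrac{\pi}{L}(n-1))^{2m}$ for all $n > m$ and $\mu_n = 0$ for $n \le m$, where $L > 0$. Define $C(l, d) := \#\{\bar n \in \mathbb{N}^d : \sum_{i=1}^d \mu_{n_i} \le \mu_l\}$ for $l \in \mathbb{N}$. Then $C(l, d) \le 2^{-d}(l - 1 + d^{1/(2m)}(m+1))^d \,\mathrm{vol}\,B_{2m}^d$ for all $l$, and $C(l, d) \ge 2^{-d}(l - m - d^{1/(2m)})^d \,\mathrm{vol}\,B_{2m}^d$ for all $l > d^{1/(2m)} + m$. -/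
open MeasureTheory
open scoped ENNReal Pointwise

def stmt13NN : ℤ → ℕ := fun z => if 0 ≤ z then z.toNat + 1 else (-z).toNat

lemma stmt13NN_pos (z : ℤ) : 1 ≤ stmt13NN z := by unfold stmt13NN; split <;> omega

lemma stmt13NN_coe (z : ℤ) : (stmt13NN z : ℤ) = if 0 ≤ z then z + 1 else -z := by
  unfold stmt13NN; split <;> omega

lemma stmt13NN_sub_one {n : ℕ} (h : 1 ≤ n) : stmt13NN ((n : ℤ) - 1) = n := by
  unfold stmt13NN; split <;> omega

lemma stmt13NN_neg {n : ℕ} (h : 1 ≤ n) : stmt13NN (-(n : ℤ)) = n := by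
  unfold stmt13NN; split <;> omega

def stmt13Equiv {d : ℕ} (P : (Fin d → ℕ) → Prop) :
    {z : Fin d → ℤ | P fun i => stmt13NN (z i)} ≃
      (Fin d → Bool) × {n : Fin d → ℕ | (∀ i, 1 ≤ n i) ∧ P n} where
  toFun z := ⟨fun i => decide (0 ≤ z.1 i),
    ⟨fun i => stmt13NN (z.1 i), fun i => stmt13NN_pos _, z.2⟩⟩
  invFun p := ⟨fun i => if p.1 i then (p.2.1 i : ℤ) - 1 else -(p.2.1 i : ℤ), by
    have h : (fun i => stmt13NN (if p.1 i then (p.2.1 i : ℤ) - 1 else -(p.2.1 i : ℤ))) = p.2.1 := by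
      funext i
      rcases hb : p.1 i <;> simp [hb, stmt13NN_sub_one (p.2.2.1 i), stmt13NN_neg (p.2.2.1 i)]
    show P _
    rw [h]; exact p.2.2.2⟩
  left_inv z := by
    ext i
    simp only
    by_cases h : 0 ≤ z.1 i <;> simp [h, stmt13NN_coe, stmt13NN]
    omega
  right_inv p := by
    ext i
    · simp only
      have h1 := p.2.2.1 i
      by_cases hb : p.1 i = true
      · simp only [hb, if_true, decide_eq_true_eq]; omega
      · rw [Bool.not_eq_true] at hb
        simp only [hb, Bool.false_eq_true, if_false, decide_eq_false_iff_not]; omega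
    · simp only
      rcases hb : p.1 i <;>
        simp [hb, stmt13NN_sub_one (p.2.2.1 i), stmt13NN_neg (p.2.2.1 i)]

lemma stmt13_card {d : ℕ} (P : (Fin d → ℕ) → Prop) :
    Nat.card {z : Fin d → ℤ | P fun i => stmt13NN (z i)} =
      2 ^ d * Nat.card {n : Fin d → ℕ | (∀ i, 1 ≤ n i) ∧ P n} := by
  rw [Nat.card_congr (stmt13Equiv P), Nat.card_prod]
  congr 1
  simp [Nat.card_eq_fintype_card]


noncomputable def stmt13Cube {d : ℕ} (z : Fin d → ℤ) : Set (Fin d → ℝ) :=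
  Set.pi Set.univ fun i => Set.Ico (z i : ℝ) (z i + 1)

lemma stmt13Cube_meas {d : ℕ} (z : Fin d → ℤ) : MeasurableSet (stmt13Cube z) :=
  MeasurableSet.univ_pi fun _ => measurableSet_Ico

lemma stmt13Cube_vol {d : ℕ} (z : Fin d → ℤ) : volume (stmt13Cube z) = 1 := by
  rw [stmt13Cube, volume_pi_pi]
  simp [Real.volume_Ico]

lemma stmt13_floor_mem {d : ℕ} (x : Fin d → ℝ) : x ∈ stmt13Cube (fun i => ⌊x i⌋) := by
  intro i _
  exact ⟨Int.floor_le _, Int.lt_floor_add_one _⟩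

lemma stmt13_floor_eq {d : ℕ} {z : Fin d → ℤ} {x : Fin d → ℝ} (hx : x ∈ stmt13Cube z) :
    (fun i => ⌊x i⌋) = z := by
  funext i
  have h := hx i (Set.mem_univ i)
  exact Int.floor_eq_iff.mpr ⟨h.1, h.2⟩

lemma stmt13_card_le_vol {d : ℕ} {Z : Set (Fin d → ℤ)} (hZ : Z.Finite)
    {A : Set (Fin d → ℝ)} (h : ∀ z ∈ Z, stmt13Cube z ⊆ A) :
    (Nat.card Z : ℝ≥0∞) ≤ volume A := by
  classical
  have hdisj : (hZ.toFinset : Set (Fin d → ℤ)).PairwiseDisjoint stmt13Cube := by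
    intro a _ b _ hab
    refine Set.disjoint_left.mpr fun x hxa hxb => hab ?_
    rw [← stmt13_floor_eq hxa, ← stmt13_floor_eq hxb]
  have := measure_biUnion_finset hdisj (fun z _ => stmt13Cube_meas z) (μ := volume)
  have hsub : (⋃ z ∈ hZ.toFinset, stmt13Cube z) ⊆ A := by
    intro x hx
    rcases Set.mem_iUnion₂.mp hx with ⟨z, hz, hxz⟩
    exact h z (hZ.mem_toFinset.mp hz) hxz
  calc (Nat.card Z : ℝ≥0∞) = ∑ z ∈ hZ.toFinset, volume (stmt13Cube z) := by
        simp [stmt13Cube_vol, Nat.card_eq_card_finite_toFinset hZ]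
    _ = volume (⋃ z ∈ hZ.toFinset, stmt13Cube z) := this.symm
    _ ≤ volume A := measure_mono hsub

lemma stmt13_vol_le_card {d : ℕ} {Z : Set (Fin d → ℤ)} (hZ : Z.Finite)
    {A : Set (Fin d → ℝ)} (h : ∀ x ∈ A, (fun i => ⌊x i⌋) ∈ Z) :
    volume A ≤ (Nat.card Z : ℝ≥0∞) := by
  classical
  have hsub : A ⊆ ⋃ z ∈ hZ.toFinset, stmt13Cube z := by
    intro x hx
    exact Set.mem_biUnion (hZ.mem_toFinset.mpr (h x hx)) (stmt13_floor_mem x)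
  calc volume A ≤ volume (⋃ z ∈ hZ.toFinset, stmt13Cube z) := measure_mono hsub
    _ ≤ ∑ z ∈ hZ.toFinset, volume (stmt13Cube z) := measure_biUnion_finset_le _ _
    _ = (Nat.card Z : ℝ≥0∞) := by
        simp [stmt13Cube_vol, Nat.card_eq_card_finite_toFinset hZ]

lemma stmt13_vol_ball {m d : ℕ} {R : ℝ} (hR : 0 < R) :
    volume {x : Fin d → ℝ | ∑ j, |x j| ^ (2 * m) ≤ R ^ (2 * m)} =
      ENNReal.ofReal (R ^ d) * volume {x : Fin d → ℝ | ∑ j, |x j| ^ (2 * m) ≤ 1} := by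
  have hset : {x : Fin d → ℝ | ∑ j, |x j| ^ (2 * m) ≤ R ^ (2 * m)} =
      R • {x : Fin d → ℝ | ∑ j, |x j| ^ (2 * m) ≤ 1} := by
    ext x
    rw [Set.mem_smul_set_iff_inv_smul_mem₀ hR.ne']
    simp only [Set.mem_setOf_eq, Pi.smul_apply, smul_eq_mul, abs_mul, mul_pow,
      abs_inv, abs_of_pos hR, ← Finset.mul_sum, inv_pow]
    rw [inv_mul_le_iff₀ (by positivity), mul_one]
  rw [hset, Measure.addHaar_smul_of_nonneg volume hR.le, Module.finrank_fintype_fun_eq_card]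
  simp

lemma stmt13_volB_ne_top {m d : ℕ} (hm : 1 ≤ m) :
    volume {x : Fin d → ℝ | ∑ j, |x j| ^ (2 * m) ≤ 1} ≠ ⊤ := by
  have hsub : {x : Fin d → ℝ | ∑ j, |x j| ^ (2 * m) ≤ 1} ⊆
      Set.pi Set.univ fun _ : Fin d => Set.Icc (-1 : ℝ) 1 := by
    intro x hx i _
    have h1 : |x i| ^ (2 * m) ≤ ∑ j, |x j| ^ (2 * m) :=
      Finset.single_le_sum (f := fun j => |x j| ^ (2 * m))
        (fun j _ => (even_two_mul m).pow_nonneg _) (Finset.mem_univ i)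
    have h2 : |x i| ^ (2 * m) ≤ 1 := h1.trans hx
    have h3 : |x i| ≤ 1 := (pow_le_one_iff_of_nonneg (abs_nonneg _) (by omega)).mp h2
    exact abs_le.mp h3
  refine ne_top_of_le_ne_top ?_ (measure_mono hsub)
  rw [volume_pi_pi]
  simp only [Real.volume_Icc]
  exact ENNReal.prod_ne_top fun _ _ => ENNReal.ofReal_ne_top
set_option maxHeartbeats 1000000 in
/-- Counting bounds for `C(l,d)` in the proof of Theorem 5.3. -/
theorem stmt13 {m d : ℕ} (hm : 1 ≤ m) (hd : 1 ≤ d) (L : ℝ) (hL : 0 < L)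
    (μ : ℕ → ℝ) (hmono : Monotone μ) (hnonneg : ∀ n, 0 ≤ μ n)
    (hzero : ∀ n, 1 ≤ n → n ≤ m → μ n = 0)
    (hlow : ∀ n : ℕ, m < n → (Real.pi / L * ((n : ℝ) - m)) ^ (2 * m) ≤ μ n)
    (hup : ∀ n : ℕ, m < n → μ n ≤ (Real.pi / L * ((n : ℝ) - 1)) ^ (2 * m)) :
    (∀ l : ℕ, 1 ≤ l →
      (Nat.card {n : Fin d → ℕ | (∀ i, 1 ≤ n i) ∧ ∑ i, μ (n i) ≤ μ l} : ℝ)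
        ≤ (2 ^ d)⁻¹ * ((l : ℝ) - 1 + (d : ℝ) ^ ((1 : ℝ) / (2 * m)) * ((m : ℝ) + 1)) ^ d
          * (volume {x : Fin d → ℝ | ∑ j, |x j| ^ (2 * m) ≤ 1}).toReal) ∧
    (∀ l : ℕ, (d : ℝ) ^ ((1 : ℝ) / (2 * m)) + m < l →
      (2 ^ d)⁻¹ * ((l : ℝ) - m - (d : ℝ) ^ ((1 : ℝ) / (2 * m))) ^ d
          * (volume {x : Fin d → ℝ | ∑ j, |x j| ^ (2 * m) ≤ 1}).toReal
        ≤ (Nat.card {n : Fin d → ℕ | (∀ i, 1 ≤ n i) ∧ ∑ i, μ (n i) ≤ μ l} : ℝ)) := by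
  have ha : 0 < Real.pi / L := div_pos Real.pi_pos hL
  set a : ℝ := Real.pi / L with ha_def
  have h2m : 2 * m ≠ 0 := by omega
  have hq0 : ((2 * m : ℕ) : ℝ) ≠ 0 := Nat.cast_ne_zero.mpr h2m
  have hq1 : (1 : ℝ) ≤ ((2 * m : ℕ) : ℝ) := by exact_mod_cast Nat.one_le_iff_ne_zero.mpr h2m
  have hE : (d : ℝ) ^ (((2 * m : ℕ) : ℝ))⁻¹ = (d : ℝ) ^ ((1 : ℝ) / (2 * (m : ℝ))) := by
    rw [one_div]
    congr 1
    push_cast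
    ring
  have hd1 : (1 : ℝ) ≤ (d : ℝ) ^ ((1 : ℝ) / (2 * (m : ℝ))) :=
    Real.one_le_rpow (by exact_mod_cast hd) (by positivity)
  have hzero' : ∀ n, n ≤ m → μ n = 0 := by
    intro n hn
    refine le_antisymm ?_ (hnonneg n)
    calc μ n ≤ μ m := hmono hn
      _ = 0 := hzero m hm le_rfl
  have hsupp : ∀ n, m < n → 0 < μ n := by
    intro n hn
    refine lt_of_lt_of_le ?_ (hlow n hn)
    have h1 : (0 : ℝ) < (n : ℝ) - m := by
      have : (m : ℝ) < n := by exact_mod_cast hn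
      linarith
    positivity
  -- finiteness of the ℕ-lattice set
  have hSfin : ∀ l : ℕ,
      {n : Fin d → ℕ | (∀ i, 1 ≤ n i) ∧ ∑ i, μ (n i) ≤ μ l}.Finite := by
    intro l
    apply Set.Finite.subset (Set.Finite.pi fun _ : Fin d => Set.finite_Iic (m + l))
    rintro n ⟨hn1, hn2⟩
    intro i _
    show n i ≤ m + l
    by_contra hni
    push_neg at hni
    have hterm : μ (n i) ≤ μ l :=
      le_trans (Finset.single_le_sum (f := fun j => μ (n j))
        (fun j _ => hnonneg _) (Finset.mem_univ i)) hn2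
    have hmlt : m < n i := by omega
    rcases le_or_gt l m with hlm | hlm
    · rw [hzero' l hlm] at hterm
      exact absurd hterm (not_le.mpr (hsupp _ hmlt))
    · have hcast : (m : ℝ) + l + 1 ≤ (n i : ℝ) := by exact_mod_cast hni
      have hl1 : (1 : ℝ) ≤ (l : ℝ) := by
        have : 1 ≤ l := hm.trans hlm.le
        exact_mod_cast this
      have hlt : (a * ((l : ℝ) - 1)) ^ (2 * m) < (a * ((n i : ℝ) - m)) ^ (2 * m) := by
        apply pow_lt_pow_left₀ _ (by nlinarith) h2m
        have : (l : ℝ) - 1 < (n i : ℝ) - m := by linarith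
        exact mul_lt_mul_of_pos_left this ha
      have := (hup l hlm).trans_lt (hlt.trans_le (hlow _ hmlt))
      linarith
  have hZfin : ∀ l : ℕ,
      {z : Fin d → ℤ | ∑ i, μ (stmt13NN (z i)) ≤ μ l}.Finite := by
    intro l
    have : Finite ↥{n : Fin d → ℕ | (∀ i, 1 ≤ n i) ∧ ∑ i, μ (n i) ≤ μ l} :=
      (hSfin l).to_subtype
    rw [← Set.finite_coe_iff]
    exact Finite.of_equiv _ (stmt13Equiv (fun n => ∑ i, μ (n i) ≤ μ l)).symm
  have hVfin := stmt13_volB_ne_top (m := m) (d := d) hm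
  have h2d : (0 : ℝ) < 2 ^ d := by positivity
  constructor
  · -- upper bound
    intro l hl
    set R : ℝ := (l : ℝ) - 1 + (d : ℝ) ^ ((1 : ℝ) / (2 * m)) * ((m : ℝ) + 1) with hR_def
    have hl1 : (1 : ℝ) ≤ (l : ℝ) := by exact_mod_cast hl
    have hR : 0 < R := by
      have hm0 : (0 : ℝ) ≤ (m : ℝ) := Nat.cast_nonneg m
      have ht : (1 : ℝ) * ((m : ℝ) + 1) ≤ (d : ℝ) ^ ((1 : ℝ) / (2 * (m : ℝ))) * ((m : ℝ) + 1) :=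
        mul_le_mul_of_nonneg_right hd1 (by linarith)
      rw [hR_def]
      linarith
    -- cubes are contained in the large ball
    have h1 : ∀ z ∈ {z : Fin d → ℤ | ∑ i, μ (stmt13NN (z i)) ≤ μ l},
        stmt13Cube z ⊆ {x : Fin d → ℝ | ∑ j, |x j| ^ (2 * m) ≤ R ^ (2 * m)} := by
      intro z hz x hx
      have hz' : ∑ i, μ (stmt13NN (z i)) ≤ μ l := hz
      set n : Fin d → ℕ := fun i => stmt13NN (z i) with hn_def
      set v : Fin d → ℝ := fun i => max ((n i : ℝ) - m) 0 with hv_def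
      have hv0 : ∀ i, 0 ≤ v i := fun i => le_max_right _ _
      have hxn : ∀ i, |x i| ≤ (n i : ℝ) := by
        intro i
        have hxi := hx i (Set.mem_univ i)
        have hni := stmt13NN_coe (z i)
        rw [abs_le]
        by_cases h0 : 0 ≤ z i
        · rw [if_pos h0] at hni
          have hnr : (n i : ℝ) = (z i : ℝ) + 1 := by exact_mod_cast hni
          have hz0 : (0 : ℝ) ≤ (z i : ℝ) := by exact_mod_cast h0
          exact ⟨by linarith [hxi.1], by linarith [hxi.2]⟩
        · rw [if_neg h0] at hni
          have hnr : (n i : ℝ) = -(z i : ℝ) := by exact_mod_cast hni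
          have hz0 : (z i : ℝ) + 1 ≤ 0 := by exact_mod_cast (by omega : z i + 1 ≤ 0)
          exact ⟨by linarith [hxi.1], by linarith [hxi.2]⟩
      have hterm : ∀ i, μ (n i) ≤ μ l := fun i =>
        le_trans (Finset.single_le_sum (f := fun j => μ (n j))
          (fun j _ => hnonneg _) (Finset.mem_univ i)) hz'
      have hsumv : ∑ i, v i ^ (2 * m) ≤ ((l : ℝ) - 1) ^ (2 * m) := by
        rcases le_or_gt l m with hlm | hlm
        · have hvz : ∀ i, v i = 0 := by
            intro i
            have hμ0 : μ (n i) = 0 := by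
              have := hterm i
              rw [hzero' l hlm] at this
              exact le_antisymm this (hnonneg _)
            have hnm : n i ≤ m := by
              by_contra hc
              push_neg at hc
              exact absurd hμ0 (ne_of_gt (hsupp _ hc))
            apply max_eq_right
            have : (n i : ℝ) ≤ m := by exact_mod_cast hnm
            linarith
          rw [Finset.sum_eq_zero fun i _ => by rw [hvz i]; exact zero_pow h2m]
          exact (even_two_mul m).pow_nonneg _
        · have key : ∀ i, (a * v i) ^ (2 * m) ≤ μ (n i) := by
            intro i
            rcases le_or_gt (n i) m with h | h
            · have hvi : v i = 0 := max_eq_right (by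
                have : (n i : ℝ) ≤ m := by exact_mod_cast h
                linarith)
              rw [hvi, mul_zero, zero_pow h2m]
              exact hnonneg _
            · have hvi : v i = (n i : ℝ) - m := max_eq_left (by
                have : (m : ℝ) + 1 ≤ (n i : ℝ) := by exact_mod_cast h
                linarith)
              rw [hvi]
              exact hlow _ h
          have hs1 : a ^ (2 * m) * ∑ i, v i ^ (2 * m) ≤ a ^ (2 * m) * ((l : ℝ) - 1) ^ (2 * m) := by
            calc a ^ (2 * m) * ∑ i, v i ^ (2 * m) = ∑ i, (a * v i) ^ (2 * m) := by
                  rw [Finset.mul_sum]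
                  exact Finset.sum_congr rfl fun i _ => (mul_pow _ _ _).symm
              _ ≤ ∑ i, μ (n i) := Finset.sum_le_sum fun i _ => key i
              _ ≤ μ l := hz'
              _ ≤ (a * ((l : ℝ) - 1)) ^ (2 * m) := hup l hlm
              _ = a ^ (2 * m) * ((l : ℝ) - 1) ^ (2 * m) := mul_pow _ _ _
          exact le_of_mul_le_mul_left hs1 (pow_pos ha _)
      -- Minkowski
      have hmink := Real.Lp_add_le_of_nonneg (s := Finset.univ) (f := v)
        (g := fun _ : Fin d => (m : ℝ)) (p := ((2 * m : ℕ) : ℝ)) hq1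
        (fun i _ => hv0 i) (fun i _ => by positivity)
      simp only [Real.rpow_natCast] at hmink
      have hp1 : (∑ i, v i ^ (2 * m)) ^ (1 / ((2 * m : ℕ) : ℝ)) ≤ (l : ℝ) - 1 := by
        have hmono' := Real.rpow_le_rpow
          (Finset.sum_nonneg fun i _ => (even_two_mul m).pow_nonneg _) hsumv
          (by positivity : (0 : ℝ) ≤ 1 / ((2 * m : ℕ) : ℝ))
        rw [one_div] at hmono' ⊢
        rwa [Real.pow_rpow_inv_natCast (by linarith) h2m] at hmono'
      have hp2 : (∑ _i : Fin d, ((m : ℝ)) ^ (2 * m)) ^ (1 / ((2 * m : ℕ) : ℝ))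
          = (d : ℝ) ^ ((1 : ℝ) / (2 * (m : ℝ))) * m := by
        rw [Finset.sum_const, Finset.card_univ, Fintype.card_fin, nsmul_eq_mul,
          one_div, Real.mul_rpow (by positivity) (by positivity),
          Real.pow_rpow_inv_natCast (by positivity) h2m, hE]
      have hT0 : (0 : ℝ) ≤ ∑ i, (v i + m) ^ (2 * m) :=
        Finset.sum_nonneg fun i _ => (even_two_mul m).pow_nonneg _
      have hTR : ∑ i, (v i + (m : ℝ)) ^ (2 * m) ≤ R ^ (2 * m) := by
        have hle : (∑ i, (v i + (m : ℝ)) ^ (2 * m)) ^ (1 / ((2 * m : ℕ) : ℝ)) ≤ R := by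
          refine hmink.trans ?_
          rw [hp2] at *
          have := hp1
          nlinarith [hd1]
        have h2 := Real.rpow_le_rpow (Real.rpow_nonneg hT0 _) hle
          (by positivity : (0 : ℝ) ≤ ((2 * m : ℕ) : ℝ))
        rw [Real.rpow_natCast, Real.rpow_natCast, one_div,
          Real.rpow_inv_natCast_pow hT0 h2m] at h2
        exact h2
      show ∑ j, |x j| ^ (2 * m) ≤ R ^ (2 * m)
      refine le_trans (Finset.sum_le_sum fun i _ => ?_) hTR
      have hnv : (n i : ℝ) ≤ v i + m := by
        have := le_max_left ((n i : ℝ) - m) 0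
        have : (n i : ℝ) - m ≤ v i := this
        linarith
      exact pow_le_pow_left₀ (abs_nonneg _) ((hxn i).trans hnv) _
    have hA := (stmt13_card_le_vol (hZfin l) h1).trans_eq (stmt13_vol_ball (m := m) hR)
    rw [stmt13_card (fun n => ∑ i, μ (n i) ≤ μ l)] at hA
    have hRHSne : ENNReal.ofReal (R ^ d) *
        volume {x : Fin d → ℝ | ∑ j, |x j| ^ (2 * m) ≤ 1} ≠ ⊤ :=
      ENNReal.mul_ne_top ENNReal.ofReal_ne_top hVfin
    have hreal := ENNReal.toReal_mono hRHSne hA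
    rw [ENNReal.toReal_mul, ENNReal.toReal_ofReal (by positivity), ENNReal.toReal_natCast] at hreal
    push_cast at hreal
    set Vb := (volume {x : Fin d → ℝ | ∑ j, |x j| ^ (2 * m) ≤ 1}).toReal with hVb
    calc ((Nat.card {n : Fin d → ℕ | (∀ i, 1 ≤ n i) ∧ ∑ i, μ (n i) ≤ μ l} : ℕ) : ℝ)
        = (2 ^ d : ℝ)⁻¹ * ((2 : ℝ) ^ d *
            (Nat.card {n : Fin d → ℕ | (∀ i, 1 ≤ n i) ∧ ∑ i, μ (n i) ≤ μ l} : ℝ)) := by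
          field_simp
      _ ≤ (2 ^ d : ℝ)⁻¹ * (R ^ d * Vb) := by
          apply mul_le_mul_of_nonneg_left _ (by positivity)
          exact hreal
      _ = (2 ^ d)⁻¹ * R ^ d * Vb := by ring
  · -- lower bound
    intro l hl
    set R : ℝ := (l : ℝ) - m - (d : ℝ) ^ ((1 : ℝ) / (2 * m)) with hR_def
    have hR : 0 < R := by
      have h' : (d : ℝ) ^ ((1 : ℝ) / (2 * (m : ℝ))) + m < l := hl
      rw [hR_def]
      linarith
    have hml : m < l := by
      have : (m : ℝ) + 1 ≤ (l : ℝ) := by nlinarith [hd1]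
      exact_mod_cast (by linarith : (m : ℝ) < (l : ℝ))
    have h2 : ∀ x ∈ {x : Fin d → ℝ | ∑ j, |x j| ^ (2 * m) ≤ R ^ (2 * m)},
        (fun i => ⌊x i⌋) ∈ {z : Fin d → ℤ | ∑ i, μ (stmt13NN (z i)) ≤ μ l} := by
      intro x hx
      show ∑ i, μ (stmt13NN ⌊x i⌋) ≤ μ l
      have hni : ∀ i, (stmt13NN ⌊x i⌋ : ℝ) - 1 ≤ |x i| := by
        intro i
        have hniz := stmt13NN_coe ⌊x i⌋
        have hfl := Int.floor_le (x i)
        have hfu := Int.lt_floor_add_one (x i)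
        by_cases h0 : 0 ≤ ⌊x i⌋
        · rw [if_pos h0] at hniz
          have hnr : (stmt13NN ⌊x i⌋ : ℝ) = (⌊x i⌋ : ℝ) + 1 := by exact_mod_cast hniz
          have hz0 : (0 : ℝ) ≤ (⌊x i⌋ : ℝ) := by exact_mod_cast h0
          have : 0 ≤ x i := le_trans hz0 hfl
          rw [abs_of_nonneg this]
          linarith
        · rw [if_neg h0] at hniz
          have hnr : (stmt13NN ⌊x i⌋ : ℝ) = -(⌊x i⌋ : ℝ) := by exact_mod_cast hniz
          have hz0 : (⌊x i⌋ : ℝ) + 1 ≤ 0 := by exact_mod_cast (by omega : ⌊x i⌋ + 1 ≤ 0)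
          have : x i < 0 := lt_of_lt_of_le hfu hz0
          rw [abs_of_neg this]
          linarith
      have key : ∀ i, μ (stmt13NN ⌊x i⌋) ≤ a ^ (2 * m) * |x i| ^ (2 * m) := by
        intro i
        have h1le : (1 : ℝ) ≤ (stmt13NN ⌊x i⌋ : ℝ) := by exact_mod_cast stmt13NN_pos ⌊x i⌋
        have hstep : (a * ((stmt13NN ⌊x i⌋ : ℝ) - 1)) ^ (2 * m) ≤ (a * |x i|) ^ (2 * m) := by
          apply pow_le_pow_left₀ (by nlinarith)
          exact mul_le_mul_of_nonneg_left (hni i) ha.le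
        rcases le_or_gt (stmt13NN ⌊x i⌋) m with h | h
        · rw [hzero' _ h]
          calc (0 : ℝ) ≤ (a * |x i|) ^ (2 * m) := by positivity
            _ = a ^ (2 * m) * |x i| ^ (2 * m) := mul_pow _ _ _
        · calc μ (stmt13NN ⌊x i⌋) ≤ (a * ((stmt13NN ⌊x i⌋ : ℝ) - 1)) ^ (2 * m) := hup _ h
            _ ≤ (a * |x i|) ^ (2 * m) := hstep
            _ = a ^ (2 * m) * |x i| ^ (2 * m) := mul_pow _ _ _
      calc ∑ i, μ (stmt13NN ⌊x i⌋) ≤ ∑ i, a ^ (2 * m) * |x i| ^ (2 * m) :=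
            Finset.sum_le_sum fun i _ => key i
        _ = a ^ (2 * m) * ∑ j, |x j| ^ (2 * m) := by rw [← Finset.mul_sum]
        _ ≤ a ^ (2 * m) * R ^ (2 * m) :=
            mul_le_mul_of_nonneg_left hx (by positivity)
        _ ≤ a ^ (2 * m) * ((l : ℝ) - m) ^ (2 * m) := by
            apply mul_le_mul_of_nonneg_left _ (by positivity)
            apply pow_le_pow_left₀ hR.le
            simp only [hR_def]
            nlinarith [hd1]
        _ = (a * ((l : ℝ) - m)) ^ (2 * m) := (mul_pow _ _ _).symm
        _ ≤ μ l := hlow l hml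
    have hA := (stmt13_vol_ball (m := m) hR).symm.trans_le (stmt13_vol_le_card (hZfin l) h2)
    rw [stmt13_card (fun n => ∑ i, μ (n i) ≤ μ l)] at hA
    have hreal := ENNReal.toReal_mono (ENNReal.natCast_ne_top _) hA
    rw [ENNReal.toReal_mul, ENNReal.toReal_ofReal (by positivity), ENNReal.toReal_natCast] at hreal
    push_cast at hreal
    set Vb := (volume {x : Fin d → ℝ | ∑ j, |x j| ^ (2 * m) ≤ 1}).toReal with hVb
    calc (2 ^ d : ℝ)⁻¹ * R ^ d * Vb = (2 ^ d : ℝ)⁻¹ * (R ^ d * Vb) := by ring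
      _ ≤ (2 ^ d : ℝ)⁻¹ * ((2 : ℝ) ^ d *
            (Nat.card {n : Fin d → ℕ | (∀ i, 1 ≤ n i) ∧ ∑ i, μ (n i) ≤ μ l} : ℝ)) := by
          apply mul_le_mul_of_nonneg_left _ (by positivity)
          exact hreal
      _ = (Nat.card {n : Fin d → ℕ | (∀ i, 1 ≤ n i) ∧ ∑ i, μ (n i) ≤ μ l} : ℝ) := by
          field_simp
end
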